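/- Bäcklund transformation of the Z_n-Sinh-Gordon equation (matrix form). Let n ≥ 1, let Γ be the n×n lower shift matrix over ℂ, let a be a nonzero real number, and let u_k, u'_k : ℝ×ℝ → ℝ (0 ≤ k ≤ n−1) be smooth functions. Define U(x,t) = Σ_{k=0}^{n−1} u_k(x,t) Γ^k and U'(x,t) = Σ_{k=0}^{n−1} u'_k(x,t) Γ^k. Suppose that ∂_x((U'+U)/2) = a · sinh((U'−U)/2) and ∂_t((U'−U)/2) = (1/a) · sinh((U'+U)/2) hold everywhere, and that U solves the Z_n-Sinh-Gordon equation ∂_t∂_x U = sinh U. Then U' also solves ∂_t∂_x U' = sinh U'. -/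

import Mathlib

/-- Matrix hyperbolic sine: `sinh M = (exp(M) − exp(−M))/2`. -/
noncomputable def matSinh {n : ℕ} (M : Matrix (Fin n) (Fin n) ℂ) : Matrix (Fin n) (Fin n) ℂ :=
  (2 : ℂ)⁻¹ • (NormedSpace.exp M - NormedSpace.exp (-M))

/-- The `n×n` lower shift matrix `Γ`, with `Γ i j = 1` iff `i = j + 1`. -/
def lowerShift (n : ℕ) : Matrix (Fin n) (Fin n) ℂ :=
  Matrix.of fun i j => if (i : ℕ) = (j : ℕ) + 1 then 1 else 0

namespace BL

variable {n : ℕ}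

lemma commute_gamma_sum (c : ℕ → ℂ) (e : ℕ → ℕ) (s : Finset ℕ) :
    Commute (lowerShift n) (∑ k ∈ s, c k • lowerShift n ^ (e k)) :=
  Commute.sum_right _ _ _ fun k _ => ((Commute.refl _).pow_right (e k)).smul_right _

lemma commute_zn (c d : ℕ → ℂ) (s t : Finset ℕ) :
    Commute (∑ k ∈ s, c k • lowerShift n ^ k) (∑ k ∈ t, d k • lowerShift n ^ k) :=
  Commute.sum_left _ _ _ fun k _ =>
    (Commute.sum_right _ _ _ fun l _ =>
      (((Commute.refl _).pow_pow k l).smul_right _).smul_left _)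

lemma N_eq_gamma_mul (c : ℕ → ℂ) :
    (∑ k ∈ Finset.Ico 1 n, c k • lowerShift n ^ k)
      = lowerShift n * ∑ k ∈ Finset.Ico 1 n, c k • lowerShift n ^ (k - 1) := by
  rw [Finset.mul_sum]
  refine Finset.sum_congr rfl fun k hk => ?_
  have hk1 : 1 ≤ k := (Finset.mem_Ico.mp hk).1
  obtain ⟨m, rfl⟩ := Nat.exists_eq_add_of_le hk1
  rw [mul_smul_comm, pow_add, pow_one]
  simp

lemma ls_pow_eq_zero_of_lt (k : ℕ) :
    ∀ (i j : Fin n), (i : ℕ) < (j : ℕ) + k → (lowerShift n ^ k) i j = 0 := by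
  induction k with
  | zero =>
    intro i j h
    simp only [pow_zero, Matrix.one_apply]
    rw [if_neg]
    intro hij; subst hij; omega
  | succ k ih =>
    intro i j h
    rw [pow_succ', Matrix.mul_apply]
    apply Finset.sum_eq_zero
    intro l _
    by_cases hl : (i : ℕ) = (l : ℕ) + 1
    · rw [ih l j (by omega), mul_zero]
    · show (lowerShift n) i l * _ = 0
      rw [lowerShift, Matrix.of_apply, if_neg hl, zero_mul]

lemma ls_pow_n : lowerShift n ^ n = 0 := by
  ext i j
  rw [ls_pow_eq_zero_of_lt n i j (by omega)]
  rfl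

lemma N_pow_n (c : ℕ → ℂ) : (∑ k ∈ Finset.Ico 1 n, c k • lowerShift n ^ k) ^ n = 0 := by
  rw [N_eq_gamma_mul, (commute_gamma_sum _ _ _).mul_pow, ls_pow_n, zero_mul]

lemma N_pow_ge (c : ℕ → ℂ) {m : ℕ} (hm : n ≤ m) :
    (∑ k ∈ Finset.Ico 1 n, c k • lowerShift n ^ k) ^ m = 0 := by
  rw [← Nat.add_sub_cancel' hm, pow_add, N_pow_n, zero_mul]

lemma N_pow_pred_mul (c d : ℕ → ℂ) (hn : 1 ≤ n) :
    (∑ k ∈ Finset.Ico 1 n, c k • lowerShift n ^ k) ^ (n - 1)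
      * (∑ k ∈ Finset.Ico 1 n, d k • lowerShift n ^ k) = 0 := by
  rw [N_eq_gamma_mul c, N_eq_gamma_mul d, (commute_gamma_sum _ _ _).mul_pow]
  set B := ∑ k ∈ Finset.Ico 1 n, c k • lowerShift n ^ (k - 1)
  set B' := ∑ k ∈ Finset.Ico 1 n, d k • lowerShift n ^ (k - 1)
  have hc : Commute (lowerShift n) (B ^ (n-1)) := (commute_gamma_sum _ _ _).pow_right _
  calc lowerShift n ^ (n-1) * B ^ (n-1) * (lowerShift n * B')
      = lowerShift n ^ (n-1) * (B ^ (n-1) * lowerShift n) * B' := by ring_nf; rw [mul_assoc, mul_assoc, mul_assoc]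
    _ = lowerShift n ^ (n-1) * (lowerShift n * B ^ (n-1)) * B' := by rw [hc.eq]
    _ = (lowerShift n ^ (n-1) * lowerShift n) * (B ^ (n-1) * B') := by rw [mul_assoc, mul_assoc, mul_assoc]
    _ = 0 := by rw [← pow_succ, Nat.sub_add_cancel hn, ls_pow_n, zero_mul]


noncomputable section
open NormedSpace

lemma exp_scalar (c : ℂ) :
    exp (c • (1 : Matrix (Fin n) (Fin n) ℂ)) = Complex.exp c • 1 := by
  rw [exp_eq_tsum (𝕂 := ℂ)]
  have h1 : ∀ m : ℕ, ((m.factorial : ℂ))⁻¹ • (c • (1 : Matrix (Fin n) (Fin n) ℂ)) ^ m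
      = (((m.factorial : ℂ))⁻¹ * c ^ m) • (1 : Matrix (Fin n) (Fin n) ℂ) := fun m => by
    rw [smul_pow, one_pow, smul_smul]
  simp_rw [h1]
  have hs : Summable fun m : ℕ => ((m.factorial : ℂ))⁻¹ * c ^ m := by
    simpa [smul_eq_mul] using NormedSpace.expSeries_summable' (𝕂 := ℂ) c
  rw [hs.tsum_smul_const]
  congr 1
  rw [Complex.exp_eq_exp_ℂ, exp_eq_tsum (𝕂 := ℂ)]
  simp [smul_eq_mul]

lemma exp_nilp (c : ℕ → ℂ) :
    exp (∑ k ∈ Finset.Ico 1 n, c k • lowerShift n ^ k)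
      = ∑ m ∈ Finset.range n, ((m.factorial : ℂ))⁻¹ • (∑ k ∈ Finset.Ico 1 n, c k • lowerShift n ^ k) ^ m := by
  rw [exp_eq_tsum (𝕂 := ℂ)]
  exact tsum_eq_sum fun m hm => by
    rw [N_pow_ge c (by simpa using hm), smul_zero]

lemma exp_zn (hn : 1 ≤ n) (c : ℕ → ℂ) :
    exp (∑ k ∈ Finset.range n, c k • lowerShift n ^ k)
      = Complex.exp (c 0) • ∑ m ∈ Finset.range n,
          ((m.factorial : ℂ))⁻¹ • (∑ k ∈ Finset.Ico 1 n, c k • lowerShift n ^ k) ^ m := by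
  have hsplit : (∑ k ∈ Finset.range n, c k • lowerShift n ^ k)
      = c 0 • (1 : Matrix (Fin n) (Fin n) ℂ) + ∑ k ∈ Finset.Ico 1 n, c k • lowerShift n ^ k := by
    rw [Finset.range_eq_Ico, Finset.sum_eq_sum_Ico_succ_bot hn]
    simp
  rw [hsplit, Matrix.exp_add_of_commute _ _ ((Commute.one_left _).smul_left _), exp_scalar,
    exp_nilp, smul_mul_assoc, one_mul]


lemma hasDerivAt_pow' {A : Type*} [NormedRing A] [NormedAlgebra ℝ A] {f : ℝ → A} {f' : A} {t : ℝ}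
    (h : HasDerivAt f f' t) (hc : Commute (f t) f') (m : ℕ) :
    HasDerivAt (fun s => f s ^ m) (m • (f t ^ (m - 1) * f')) t := by
  induction m with
  | zero => simpa using hasDerivAt_const t (1 : A)
  | succ m ih =>
    have hmul := h.mul ih
    have hval : f' * f t ^ m + f t * (m • (f t ^ (m - 1) * f'))
        = (m + 1) • (f t ^ (m + 1 - 1) * f') := by
      cases m with
      | zero => simp
      | succ k =>
        have h1 : f' * f t ^ (k + 1) = f t ^ (k + 1) * f' := ((hc.pow_left (k + 1)).eq).symm
        have h2 : f t * ((k + 1) • (f t ^ (k + 1 - 1) * f'))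
            = (k + 1) • (f t ^ (k + 1) * f') := by
          rw [mul_smul_comm, Nat.add_sub_cancel, ← mul_assoc, ← pow_succ']
        rw [h1, h2, Nat.add_sub_cancel]
        conv_rhs => rw [succ_nsmul, succ_nsmul]
        rw [add_comm, succ_nsmul]
    have : (fun s => f s ^ (m + 1)) = fun s => f s * f s ^ m := by
      funext s; rw [pow_succ']
    rw [this]
    exact hval ▸ hmul

section Instrumented

attribute [local instance] Matrix.linftyOpNormedAddCommGroup Matrix.linftyOpNormedRing
  Matrix.linftyOpNormedAlgebra

lemma hasDerivAt_entry {f : ℝ → Matrix (Fin n) (Fin n) ℂ} {f' : Matrix (Fin n) (Fin n) ℂ}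
    {t : ℝ} (h : HasDerivAt f f' t) (i j : Fin n) :
    HasDerivAt (fun s => f s i j) (f' i j) t := by
  let L : Matrix (Fin n) (Fin n) ℂ →L[ℂ] ℂ :=
    LinearMap.toContinuousLinearMap (Matrix.entryLinearMap ℂ ℂ i j)
  exact (L.restrictScalars ℝ).hasFDerivAt.comp_hasDerivAt t h

lemma hasDerivAt_exp_zn (hn : 1 ≤ n) (c : ℕ → ℝ → ℂ) (d : ℕ → ℂ) (t : ℝ)
    (hc : ∀ k, HasDerivAt (fun s => c k s) (d k) t) :
    HasDerivAt (fun s => exp (∑ k ∈ Finset.range n, c k s • lowerShift n ^ k))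
      (exp (∑ k ∈ Finset.range n, c k t • lowerShift n ^ k)
        * ∑ k ∈ Finset.range n, d k • lowerShift n ^ k) t := by
  set Γ := lowerShift n with hΓ
  have hfun : (fun s => exp (∑ k ∈ Finset.range n, c k s • Γ ^ k))
      = fun s => Complex.exp (c 0 s) •
          ∑ m ∈ Finset.range n, ((m.factorial : ℂ))⁻¹ • (∑ k ∈ Finset.Ico 1 n, c k s • Γ ^ k) ^ m := by
    funext s; exact exp_zn hn fun k => c k s
  set N : ℝ → Matrix (Fin n) (Fin n) ℂ := fun s => ∑ k ∈ Finset.Ico 1 n, c k s • Γ ^ k with hN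
  set N' : Matrix (Fin n) (Fin n) ℂ := ∑ k ∈ Finset.Ico 1 n, d k • Γ ^ k with hN'
  set S : Matrix (Fin n) (Fin n) ℂ :=
    ∑ m ∈ Finset.range n, ((m.factorial : ℂ))⁻¹ • (N t) ^ m with hS
  have hNder : HasDerivAt N N' t :=
    HasDerivAt.fun_sum fun k _ => (hc k).smul_const _
  have hcomm : Commute (N t) N' := commute_zn _ _ _ _
  have hSder : HasDerivAt (fun s => ∑ m ∈ Finset.range n, ((m.factorial : ℂ))⁻¹ • (N s) ^ m)
      (∑ m ∈ Finset.range n, ((m.factorial : ℂ))⁻¹ • (m • ((N t) ^ (m - 1) * N'))) t :=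
    HasDerivAt.fun_sum fun m _ => ((hasDerivAt_pow' hNder hcomm m).fun_const_smul _)
  -- telescoped value
  have hval : (∑ m ∈ Finset.range n, ((m.factorial : ℂ))⁻¹ • (m • ((N t) ^ (m - 1) * N')))
      = S * N' := by
    obtain ⟨p, rfl⟩ : ∃ p, n = p + 1 := ⟨n - 1, by omega⟩
    rw [Finset.sum_range_succ' (fun m => ((m.factorial : ℂ))⁻¹ • (m • ((N t) ^ (m - 1) * N'))) p]
    have h0 : ((Nat.factorial 0 : ℂ))⁻¹ • ((0 : ℕ) • ((N t) ^ (0 - 1) * N')) = 0 := by simp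
    rw [h0, add_zero]
    have hterm : ∀ i : ℕ, (((i+1).factorial : ℂ))⁻¹ • (((i+1) : ℕ) • ((N t) ^ (i + 1 - 1) * N'))
        = ((i.factorial : ℂ))⁻¹ • ((N t) ^ i * N') := by
      intro i
      rw [Nat.add_sub_cancel, ← Nat.cast_smul_eq_nsmul ℂ, smul_smul, Nat.factorial_succ]
      congr 1
      have h1 : ((i : ℂ) + 1) ≠ 0 := Nat.cast_add_one_ne_zero i
      have h2 : ((i.factorial : ℂ)) ≠ 0 := Nat.cast_ne_zero.mpr i.factorial_ne_zero
      push_cast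
      field_simp
    simp_rw [hterm]
    have : (∑ i ∈ Finset.range p, ((i.factorial : ℂ))⁻¹ • ((N t) ^ i * N'))
        = (∑ i ∈ Finset.range p, ((i.factorial : ℂ))⁻¹ • (N t) ^ i) * N' := by
      rw [Finset.sum_mul]; simp_rw [smul_mul_assoc]
    rw [this, hS, Finset.sum_range_succ, add_mul, smul_mul_assoc]
    have hz : N t ^ p * N' = 0 := by
      have h := N_pow_pred_mul (n := p + 1) (fun k => c k t) d (by omega)
      simpa using h
    rw [hz, smul_zero, add_zero]
  have hE : HasDerivAt (fun s => Complex.exp (c 0 s)) (Complex.exp (c 0 t) * d 0) t := (hc 0).cexp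
  have hprod := hE.fun_smul hSder
  rw [hfun]
  refine hprod.congr_deriv (Eq.symm ?_)
  have hD : (∑ k ∈ Finset.range n, d k • Γ ^ k) = d 0 • 1 + N' := by
    rw [Finset.range_eq_Ico, Finset.sum_eq_sum_Ico_succ_bot hn]
    simp [hN']
  rw [hval, exp_zn hn (fun k => c k t), hD, ← hS]
  rw [add_comm (Complex.exp (c 0 t) • (S * N'))]
  calc (Complex.exp (c 0 t) • S) * (d 0 • (1 : Matrix (Fin n) (Fin n) ℂ) + N')
      = Complex.exp (c 0 t) • (S * (d 0 • (1 : Matrix (Fin n) (Fin n) ℂ)))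
          + Complex.exp (c 0 t) • (S * N') := by
        rw [smul_mul_assoc, mul_add, smul_add]
    _ = (Complex.exp (c 0 t) * d 0) • S + Complex.exp (c 0 t) • (S * N') := by
        rw [mul_smul_comm, mul_one, smul_smul]

lemma hasDerivAt_zn_entry (c : ℕ → ℝ → ℂ) (d : ℕ → ℂ) (t : ℝ)
    (hc : ∀ k, HasDerivAt (fun s => c k s) (d k) t) (i j : Fin n) :
    HasDerivAt (fun s => (∑ k ∈ Finset.range n, c k s • lowerShift n ^ k) i j)
      ((∑ k ∈ Finset.range n, d k • lowerShift n ^ k) i j) t :=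
  hasDerivAt_entry (HasDerivAt.fun_sum fun k _ => (hc k).smul_const _) i j

lemma hasDerivAt_sinh_entry (hn : 1 ≤ n) (c : ℕ → ℝ → ℂ) (d : ℕ → ℂ) (t : ℝ)
    (hc : ∀ k, HasDerivAt (fun s => c k s) (d k) t) (i j : Fin n) :
    HasDerivAt (fun s => matSinh (∑ k ∈ Finset.range n, c k s • lowerShift n ^ k) i j)
      (((2 : ℂ)⁻¹ • ((exp (∑ k ∈ Finset.range n, c k t • lowerShift n ^ k)
            + exp (-∑ k ∈ Finset.range n, c k t • lowerShift n ^ k))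
          * ∑ k ∈ Finset.range n, d k • lowerShift n ^ k)) i j) t := by
  have hneg : ∀ s : ℝ, (∑ k ∈ Finset.range n, (-(c k s)) • lowerShift n ^ k)
      = -∑ k ∈ Finset.range n, c k s • lowerShift n ^ k := by
    intro s; simp [neg_smul, ← Finset.sum_neg_distrib]
  have hnegd : (∑ k ∈ Finset.range n, (-(d k)) • lowerShift n ^ k)
      = -∑ k ∈ Finset.range n, d k • lowerShift n ^ k := by
    simp [neg_smul, ← Finset.sum_neg_distrib]
  have h1 := hasDerivAt_exp_zn hn c d t hc
  have h2 := hasDerivAt_exp_zn hn (fun k s => -(c k s)) (fun k => -(d k)) t (fun k => (hc k).neg)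
  simp_rw [hneg, hnegd] at h2
  have hsinh := (h1.fun_sub h2).fun_const_smul ((2 : ℂ)⁻¹)
  have hfun : (fun s => (2:ℂ)⁻¹ • (exp (∑ k ∈ Finset.range n, c k s • lowerShift n ^ k)
      - exp (-∑ k ∈ Finset.range n, c k s • lowerShift n ^ k)))
      = fun s => matSinh (∑ k ∈ Finset.range n, c k s • lowerShift n ^ k) := by
    funext s; rfl
  rw [hfun] at hsinh
  have hval : (2:ℂ)⁻¹ • (exp (∑ k ∈ Finset.range n, c k t • lowerShift n ^ k)
        * ∑ k ∈ Finset.range n, d k • lowerShift n ^ k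
      - exp (-∑ k ∈ Finset.range n, c k t • lowerShift n ^ k)
        * -∑ k ∈ Finset.range n, d k • lowerShift n ^ k)
      = (2 : ℂ)⁻¹ • ((exp (∑ k ∈ Finset.range n, c k t • lowerShift n ^ k)
            + exp (-∑ k ∈ Finset.range n, c k t • lowerShift n ^ k))
          * ∑ k ∈ Finset.range n, d k • lowerShift n ^ k) := by
    rw [mul_neg, sub_neg_eq_add, ← add_mul]
  rw [hval] at hsinh
  exact hasDerivAt_entry hsinh i j

end Instrumented

lemma cosh_mul_sinh {X Y : Matrix (Fin n) (Fin n) ℂ} (h : Commute X Y) :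
    ((2 : ℂ)⁻¹ • (exp Y + exp (-Y))) * matSinh X
      = (2 : ℂ)⁻¹ • (matSinh (X + Y) + matSinh (X - Y)) := by
  have e1 : exp Y * exp X = exp (X + Y) := by
    rw [← Matrix.exp_add_of_commute _ _ h.symm]; congr 1; abel
  have e2 : exp Y * exp (-X) = exp (-(X - Y)) := by
    rw [← Matrix.exp_add_of_commute _ _ h.symm.neg_right]; congr 1; abel
  have e3 : exp (-Y) * exp X = exp (X - Y) := by
    rw [← Matrix.exp_add_of_commute _ _ h.symm.neg_left]; congr 1; abel
  have e4 : exp (-Y) * exp (-X) = exp (-(X + Y)) := by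
    rw [← Matrix.exp_add_of_commute _ _ h.symm.neg_left.neg_right]; congr 1; abel
  rw [matSinh, matSinh, matSinh]
  rw [smul_mul_assoc, mul_smul_comm, add_mul, mul_sub, mul_sub, e1, e2, e3, e4]
  module
end
end BL

open BL in
/-- Bäcklund transformation of the `Z_n`-Sinh-Gordon equation (matrix form).
If `∂_x((U'+U)/2) = a·sinh((U'−U)/2)`, `∂_t((U'−U)/2) = (1/a)·sinh((U'+U)/2)` (entrywise),
and `U` solves `∂_t∂_x U = sinh U`, then `U'` solves `∂_t∂_x U' = sinh U'`. -/
theorem Zn_sinhGordon_backlund (n : ℕ) (hn : 1 ≤ n) (a : ℝ) (ha : a ≠ 0)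
    (u u' : ℕ → ℝ → ℝ → ℝ)
    (hu : ∀ k, ContDiff ℝ (⊤ : ℕ∞) fun p : ℝ × ℝ => u k p.1 p.2)
    (hu' : ∀ k, ContDiff ℝ (⊤ : ℕ∞) fun p : ℝ × ℝ => u' k p.1 p.2)
    (U U' : ℝ → ℝ → Matrix (Fin n) (Fin n) ℂ)
    (hU : ∀ x t, U x t = ∑ k ∈ Finset.range n, (u k x t : ℂ) • lowerShift n ^ k)
    (hU' : ∀ x t, U' x t = ∑ k ∈ Finset.range n, (u' k x t : ℂ) • lowerShift n ^ k)
    (hBx : ∀ (x t : ℝ) (i j : Fin n),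
      deriv (fun x' => ((2 : ℂ)⁻¹ • (U' x' t + U x' t)) i j) x
        = ((a : ℂ) • matSinh ((2 : ℂ)⁻¹ • (U' x t - U x t))) i j)
    (hBt : ∀ (x t : ℝ) (i j : Fin n),
      deriv (fun t' => ((2 : ℂ)⁻¹ • (U' x t' - U x t')) i j) t
        = ((a : ℂ)⁻¹ • matSinh ((2 : ℂ)⁻¹ • (U' x t + U x t))) i j)
    (hSG : ∀ (x t : ℝ) (i j : Fin n),
      deriv (fun t' => deriv (fun x' => U x' t' i j) x) t = matSinh (U x t) i j) :
    ∀ (x t : ℝ) (i j : Fin n),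
      deriv (fun t' => deriv (fun x' => U' x' t' i j) x) t = matSinh (U' x t) i j := by
  intro x t i j
  have keyX : ∀ (g : ℕ → ℝ → ℝ → ℝ), (∀ k, ContDiff ℝ (⊤ : ℕ∞) fun p : ℝ × ℝ => g k p.1 p.2) →
      ∀ (k : ℕ) (x₀ t₀ : ℝ), HasDerivAt (fun x' => g k x' t₀)
        (fderiv ℝ (fun p : ℝ × ℝ => g k p.1 p.2) (x₀, t₀) (1, 0)) x₀ := by
    intro g hg k x₀ t₀
    exact (((hg k).differentiable (by simp) (x₀, t₀)).hasFDerivAt).comp_hasDerivAt x₀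
      ((hasDerivAt_id x₀).prodMk (hasDerivAt_const x₀ t₀))
  have keyT : ∀ (g : ℕ → ℝ → ℝ → ℝ), (∀ k, ContDiff ℝ (⊤ : ℕ∞) fun p : ℝ × ℝ => g k p.1 p.2) →
      ∀ (k : ℕ) (x₀ t₀ : ℝ), HasDerivAt (fun t' => g k x₀ t')
        (fderiv ℝ (fun p : ℝ × ℝ => g k p.1 p.2) (x₀, t₀) (0, 1)) t₀ := by
    intro g hg k x₀ t₀
    exact (((hg k).differentiable (by simp) (x₀, t₀)).hasFDerivAt).comp_hasDerivAt t₀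
      ((hasDerivAt_const t₀ x₀).prodMk (hasDerivAt_id t₀))
  -- sum decompositions
  have Fv : ∀ (x₀ t' : ℝ), (2 : ℂ)⁻¹ • (U' x₀ t' - U x₀ t')
      = ∑ k ∈ Finset.range n,
          ((2 : ℂ)⁻¹ * ((u' k x₀ t' : ℂ) - (u k x₀ t' : ℂ))) • lowerShift n ^ k := by
    intro x₀ t'
    rw [hU, hU', ← Finset.sum_sub_distrib, Finset.smul_sum]
    exact Finset.sum_congr rfl fun k _ => by rw [← sub_smul, smul_smul]
  have Fw : ∀ (x₀ t' : ℝ), (2 : ℂ)⁻¹ • (U' x₀ t' + U x₀ t')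
      = ∑ k ∈ Finset.range n,
          ((2 : ℂ)⁻¹ * ((u' k x₀ t' : ℂ) + (u k x₀ t' : ℂ))) • lowerShift n ^ k := by
    intro x₀ t'
    rw [hU, hU', ← Finset.sum_add_distrib, Finset.smul_sum]
    exact Finset.sum_congr rfl fun k _ => by rw [← add_smul, smul_smul]
  -- derivative of the v-coefficients at (x, t)
  have hvder : ∀ k : ℕ, HasDerivAt (fun t' => (2 : ℂ)⁻¹ * ((u' k x t' : ℂ) - (u k x t' : ℂ)))
      ((2 : ℂ)⁻¹ * (((fderiv ℝ (fun p : ℝ × ℝ => u' k p.1 p.2) (x, t) (0, 1) : ℝ) : ℂ) - ((fderiv ℝ (fun p : ℝ × ℝ => u k p.1 p.2) (x, t) (0, 1) : ℝ) : ℂ))) t :=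
    fun k => HasDerivAt.const_mul _
      ((keyT u' hu' k x t).ofReal_comp.sub (keyT u hu k x t).ofReal_comp)
  -- inner x-derivatives of U entries
  have hUxder : ∀ (t' : ℝ) (i' j' : Fin n), HasDerivAt (fun x' => U x' t' i' j')
      ((∑ k ∈ Finset.range n, (((fderiv ℝ (fun p : ℝ × ℝ => u k p.1 p.2) (x, t') (1, 0) : ℝ) : ℂ)) • lowerShift n ^ k) i' j') x := by
    intro t' i' j'
    have h0 := BL.hasDerivAt_zn_entry (c := fun k x' => ((u k x' t' : ℝ) : ℂ))
      (d := fun k => ((fderiv ℝ (fun p : ℝ × ℝ => u k p.1 p.2) (x, t') (1, 0) : ℝ) : ℂ)) x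
      (fun k => (keyX u hu k x t').ofReal_comp) i' j'
    have hfe : (fun x' => (∑ k ∈ Finset.range n, ((u k x' t' : ℝ) : ℂ) • lowerShift n ^ k) i' j')
        = fun x' => U x' t' i' j' := by
      funext x'; rw [hU x' t']
    rw [hfe] at h0; exact h0
  -- x-differentiability of the W entries
  have hdW : ∀ (t' : ℝ), DifferentiableAt ℝ
      (fun x' => ((2 : ℂ)⁻¹ • (U' x' t' + U x' t')) i j) x := by
    intro t'
    have h0 := BL.hasDerivAt_zn_entry
      (c := fun k x' => (2 : ℂ)⁻¹ * ((u' k x' t' : ℂ) + (u k x' t' : ℂ)))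
      (d := fun k => (2 : ℂ)⁻¹ * (((fderiv ℝ (fun p : ℝ × ℝ => u' k p.1 p.2) (x, t') (1, 0) : ℝ) : ℂ) + ((fderiv ℝ (fun p : ℝ × ℝ => u k p.1 p.2) (x, t') (1, 0) : ℝ) : ℂ))) x
      (fun k => HasDerivAt.const_mul _
        ((keyX u' hu' k x t').ofReal_comp.add (keyX u hu k x t').ofReal_comp)) i j
    have hfe : (fun x' => (∑ k ∈ Finset.range n,
          ((2 : ℂ)⁻¹ * ((u' k x' t' : ℂ) + (u k x' t' : ℂ))) • lowerShift n ^ k) i j)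
        = fun x' => ((2 : ℂ)⁻¹ • (U' x' t' + U x' t')) i j := by
      funext x'; rw [Fw x' t']
    rw [hfe] at h0; exact h0.differentiableAt
  -- the matrix of t-derivatives of the v-coefficients equals a⁻¹ • sinh(W)
  have hDv : (∑ k ∈ Finset.range n,
        ((2 : ℂ)⁻¹ * (((fderiv ℝ (fun p : ℝ × ℝ => u' k p.1 p.2) (x, t) (0, 1) : ℝ) : ℂ) - ((fderiv ℝ (fun p : ℝ × ℝ => u k p.1 p.2) (x, t) (0, 1) : ℝ) : ℂ))) • lowerShift n ^ k)
      = (a : ℂ)⁻¹ • matSinh (∑ k ∈ Finset.range n,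
          ((2 : ℂ)⁻¹ * ((u' k x t : ℂ) + (u k x t : ℂ))) • lowerShift n ^ k) := by
    ext i' j'
    have h0 := BL.hasDerivAt_zn_entry
      (c := fun k t' => (2 : ℂ)⁻¹ * ((u' k x t' : ℂ) - (u k x t' : ℂ)))
      (d := fun k => (2 : ℂ)⁻¹ * (((fderiv ℝ (fun p : ℝ × ℝ => u' k p.1 p.2) (x, t) (0, 1) : ℝ) : ℂ) - ((fderiv ℝ (fun p : ℝ × ℝ => u k p.1 p.2) (x, t) (0, 1) : ℝ) : ℂ))) t
      hvder i' j'
    have hfe : (fun t' => (∑ k ∈ Finset.range n,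
          ((2 : ℂ)⁻¹ * ((u' k x t' : ℂ) - (u k x t' : ℂ))) • lowerShift n ^ k) i' j')
        = fun t' => ((2 : ℂ)⁻¹ • (U' x t' - U x t')) i' j' := by
      funext t'; rw [Fv x t']
    rw [hfe] at h0
    have h2 := hBt x t i' j'
    rw [h0.deriv] at h2
    rw [h2, Fw x t]
  -- rewrite the inner x-derivative of U' entries
  have hTfun : (fun t' => deriv (fun x' => U' x' t' i j) x)
      = fun t' => (2 * (a : ℂ)) * matSinh (∑ k ∈ Finset.range n,
            ((2 : ℂ)⁻¹ * ((u' k x t' : ℂ) - (u k x t' : ℂ))) • lowerShift n ^ k) i j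
          - deriv (fun x' => U x' t' i j) x := by
    funext t'
    have e0 : (fun x' => U' x' t' i j)
        = fun x' => 2 * (((2 : ℂ)⁻¹ • (U' x' t' + U x' t')) i j) - U x' t' i j := by
      funext x'
      rw [Matrix.smul_apply, Matrix.add_apply, smul_eq_mul]
      ring
    rw [e0, deriv_fun_sub ((hdW t').const_mul 2) (hUxder t' i j).differentiableAt,
      deriv_const_mul 2 (hdW t'), hBx x t' i j, Fv x t', Matrix.smul_apply, smul_eq_mul,
      ← mul_assoc]
  rw [hTfun]
  -- derivative of the first summand via the sinh chain rule
  have hA : HasDerivAt (fun t' => (2 * (a : ℂ)) * matSinh (∑ k ∈ Finset.range n,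
        ((2 : ℂ)⁻¹ * ((u' k x t' : ℂ) - (u k x t' : ℂ))) • lowerShift n ^ k) i j)
      ((2 * (a : ℂ)) * (((2 : ℂ)⁻¹ •
        ((NormedSpace.exp (∑ k ∈ Finset.range n,
            ((2 : ℂ)⁻¹ * ((u' k x t : ℂ) - (u k x t : ℂ))) • lowerShift n ^ k)
          + NormedSpace.exp (-∑ k ∈ Finset.range n,
            ((2 : ℂ)⁻¹ * ((u' k x t : ℂ) - (u k x t : ℂ))) • lowerShift n ^ k))
        * ∑ k ∈ Finset.range n,
            ((2 : ℂ)⁻¹ * (((fderiv ℝ (fun p : ℝ × ℝ => u' k p.1 p.2) (x, t) (0, 1) : ℝ) : ℂ) - ((fderiv ℝ (fun p : ℝ × ℝ => u k p.1 p.2) (x, t) (0, 1) : ℝ) : ℂ))) • lowerShift n ^ k)) i j)) t :=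
    HasDerivAt.const_mul _ (BL.hasDerivAt_sinh_entry hn
      (fun k t' => (2 : ℂ)⁻¹ * ((u' k x t' : ℂ) - (u k x t' : ℂ)))
      (fun k => (2 : ℂ)⁻¹ * (((fderiv ℝ (fun p : ℝ × ℝ => u' k p.1 p.2) (x, t) (0, 1) : ℝ) : ℂ) - ((fderiv ℝ (fun p : ℝ × ℝ => u k p.1 p.2) (x, t) (0, 1) : ℝ) : ℂ))) t
      hvder i j)
  -- t-differentiability of the second summand
  have hBdiff : DifferentiableAt ℝ (fun t' => deriv (fun x' => U x' t' i j) x) t := by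
    have hBfun : (fun t' => deriv (fun x' => U x' t' i j) x)
        = fun t' => (∑ k ∈ Finset.range n,
            (((fderiv ℝ (fun p : ℝ × ℝ => u k p.1 p.2) (x, t') (1, 0) : ℝ) : ℂ)) • lowerShift n ^ k) i j := by
      funext t'; exact (hUxder t' i j).deriv
    rw [hBfun]
    have hent : (fun t' => (∑ k ∈ Finset.range n,
          (((fderiv ℝ (fun p : ℝ × ℝ => u k p.1 p.2) (x, t') (1, 0) : ℝ) : ℂ)) • lowerShift n ^ k) i j)
        = fun t' => ∑ k ∈ Finset.range n,
            (((fderiv ℝ (fun p : ℝ × ℝ => u k p.1 p.2) (x, t') (1, 0) : ℝ) : ℂ)) * (lowerShift n ^ k) i j := by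
      funext t'
      rw [Matrix.sum_apply]
      exact Finset.sum_congr rfl fun k _ => by rw [Matrix.smul_apply, smul_eq_mul]
    rw [hent]
    apply DifferentiableAt.fun_sum
    intro k _
    have hsm : ContDiff ℝ (⊤ : ℕ∞) fun p : ℝ × ℝ =>
        fderiv ℝ (fun q : ℝ × ℝ => u k q.1 q.2) p (1, 0) :=
      ((hu k).fderiv_right (by exact_mod_cast le_top)).clm_apply contDiff_const
    have hg : DifferentiableAt ℝ (fun t' : ℝ => fderiv ℝ (fun p : ℝ × ℝ => u k p.1 p.2) (x, t') (1, 0)) t :=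
      (hsm.comp (contDiff_const.prodMk contDiff_id)).differentiable (by simp) t
    exact ((hg.hasDerivAt.ofReal_comp).differentiableAt).mul_const _
  rw [deriv_fun_sub hA.differentiableAt hBdiff, hA.deriv, hSG x t i j]
  -- final algebraic identity
  have hane : (a : ℂ) ≠ 0 := by exact_mod_cast ha
  have hcomm : Commute
      (∑ k ∈ Finset.range n, ((2 : ℂ)⁻¹ * ((u' k x t : ℂ) + (u k x t : ℂ))) • lowerShift n ^ k)
      (∑ k ∈ Finset.range n, ((2 : ℂ)⁻¹ * ((u' k x t : ℂ) - (u k x t : ℂ))) • lowerShift n ^ k) :=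
    BL.commute_zn _ _ _ _
  have hWV1 : (∑ k ∈ Finset.range n, ((2 : ℂ)⁻¹ * ((u' k x t : ℂ) + (u k x t : ℂ))) • lowerShift n ^ k)
      + (∑ k ∈ Finset.range n, ((2 : ℂ)⁻¹ * ((u' k x t : ℂ) - (u k x t : ℂ))) • lowerShift n ^ k)
      = U' x t := by
    rw [hU' x t, ← Finset.sum_add_distrib]
    refine Finset.sum_congr rfl fun k _ => ?_
    rw [← add_smul]
    congr 1
    ring
  have hWV2 : (∑ k ∈ Finset.range n, ((2 : ℂ)⁻¹ * ((u' k x t : ℂ) + (u k x t : ℂ))) • lowerShift n ^ k)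
      - (∑ k ∈ Finset.range n, ((2 : ℂ)⁻¹ * ((u' k x t : ℂ) - (u k x t : ℂ))) • lowerShift n ^ k)
      = U x t := by
    rw [hU x t, ← Finset.sum_sub_distrib]
    refine Finset.sum_congr rfl fun k _ => ?_
    rw [← sub_smul]
    congr 1
    ring
  have hmat : (2 * (a : ℂ)) • ((2 : ℂ)⁻¹ •
        ((NormedSpace.exp (∑ k ∈ Finset.range n,
            ((2 : ℂ)⁻¹ * ((u' k x t : ℂ) - (u k x t : ℂ))) • lowerShift n ^ k)
          + NormedSpace.exp (-∑ k ∈ Finset.range n,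
            ((2 : ℂ)⁻¹ * ((u' k x t : ℂ) - (u k x t : ℂ))) • lowerShift n ^ k))
        * ∑ k ∈ Finset.range n,
            ((2 : ℂ)⁻¹ * (((fderiv ℝ (fun p : ℝ × ℝ => u' k p.1 p.2) (x, t) (0, 1) : ℝ) : ℂ) - ((fderiv ℝ (fun p : ℝ × ℝ => u k p.1 p.2) (x, t) (0, 1) : ℝ) : ℂ))) • lowerShift n ^ k))
      = matSinh (U' x t) + matSinh (U x t) := by
    rw [hDv, mul_smul_comm, smul_smul, smul_smul]
    have hsc : 2 * (a : ℂ) * (2 : ℂ)⁻¹ * (a : ℂ)⁻¹ = 1 := by field_simp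
    rw [hsc, one_smul]
    calc (NormedSpace.exp (∑ k ∈ Finset.range n,
            ((2 : ℂ)⁻¹ * ((u' k x t : ℂ) - (u k x t : ℂ))) • lowerShift n ^ k)
          + NormedSpace.exp (-∑ k ∈ Finset.range n,
            ((2 : ℂ)⁻¹ * ((u' k x t : ℂ) - (u k x t : ℂ))) • lowerShift n ^ k))
        * matSinh (∑ k ∈ Finset.range n,
            ((2 : ℂ)⁻¹ * ((u' k x t : ℂ) + (u k x t : ℂ))) • lowerShift n ^ k)
        = (2 : ℂ) • (((2 : ℂ)⁻¹ • (NormedSpace.exp (∑ k ∈ Finset.range n,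
              ((2 : ℂ)⁻¹ * ((u' k x t : ℂ) - (u k x t : ℂ))) • lowerShift n ^ k)
            + NormedSpace.exp (-∑ k ∈ Finset.range n,
              ((2 : ℂ)⁻¹ * ((u' k x t : ℂ) - (u k x t : ℂ))) • lowerShift n ^ k)))
          * matSinh (∑ k ∈ Finset.range n,
              ((2 : ℂ)⁻¹ * ((u' k x t : ℂ) + (u k x t : ℂ))) • lowerShift n ^ k)) := by
          rw [← smul_mul_assoc, smul_smul]
          norm_num
      _ = (2 : ℂ) • ((2 : ℂ)⁻¹ •
            (matSinh ((∑ k ∈ Finset.range n, ((2 : ℂ)⁻¹ * ((u' k x t : ℂ) + (u k x t : ℂ))) • lowerShift n ^ k)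
                + ∑ k ∈ Finset.range n, ((2 : ℂ)⁻¹ * ((u' k x t : ℂ) - (u k x t : ℂ))) • lowerShift n ^ k)
              + matSinh ((∑ k ∈ Finset.range n, ((2 : ℂ)⁻¹ * ((u' k x t : ℂ) + (u k x t : ℂ))) • lowerShift n ^ k)
                - ∑ k ∈ Finset.range n, ((2 : ℂ)⁻¹ * ((u' k x t : ℂ) - (u k x t : ℂ))) • lowerShift n ^ k))) := by
          rw [BL.cosh_mul_sinh hcomm]
      _ = matSinh (U' x t) + matSinh (U x t) := by
          rw [smul_smul, hWV1, hWV2]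
          norm_num
  have hentry : (2 * (a : ℂ)) * (((2 : ℂ)⁻¹ •
        ((NormedSpace.exp (∑ k ∈ Finset.range n,
            ((2 : ℂ)⁻¹ * ((u' k x t : ℂ) - (u k x t : ℂ))) • lowerShift n ^ k)
          + NormedSpace.exp (-∑ k ∈ Finset.range n,
            ((2 : ℂ)⁻¹ * ((u' k x t : ℂ) - (u k x t : ℂ))) • lowerShift n ^ k))
        * ∑ k ∈ Finset.range n,
            ((2 : ℂ)⁻¹ * (((fderiv ℝ (fun p : ℝ × ℝ => u' k p.1 p.2) (x, t) (0, 1) : ℝ) : ℂ) - ((fderiv ℝ (fun p : ℝ × ℝ => u k p.1 p.2) (x, t) (0, 1) : ℝ) : ℂ))) • lowerShift n ^ k)) i j)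
      = (matSinh (U' x t) + matSinh (U x t)) i j := by
    rw [← hmat]
    simp only [Matrix.smul_apply, smul_eq_mul]
  rw [hentry, Matrix.add_apply]
  ring
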